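/- For every integer M ≥ 2 and nonnegative integer b, η_b = 2 · ∏_{i=2^b}^{2^{b+1}-1} i/(i + M/(M-1)) satisfies 0 < η_b < 1. -/

import Mathlib

/-- `η_b = 2 · ∏_{i=2^b}^{2^{b+1}-1} i/(i + M/(M-1))`. -/
noncomputable def eta (M : ℕ) (b : ℕ) : ℝ :=
  2 * ∏ i ∈ Finset.Ico (2 ^ b : ℕ) (2 ^ (b + 1) : ℕ),
    (i : ℝ) / ((i : ℝ) + (M : ℝ) / ((M : ℝ) - 1))

lemma telescope (m : ℕ) (hm : 0 < m) : ∀ n, m ≤ n →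
    ∏ i ∈ Finset.Ico m n, (i : ℝ) / ((i : ℝ) + 1) = (m : ℝ) / n := by
  intro n
  induction n with
  | zero => intro h; omega
  | succ k ih =>
    intro h
    rcases eq_or_lt_of_le h with h' | h'
    · subst h'
      rw [Finset.Ico_self, Finset.prod_empty]
      have hne : ((k : ℝ) + 1) ≠ 0 := by positivity
      push_cast
      rw [div_self hne]
    · have hk : m ≤ k := by omega
      rw [Finset.prod_Ico_succ_top hk, ih hk]
      have hk0 : (0 : ℝ) < k := by exact_mod_cast lt_of_lt_of_le hm hk
      have hk1 : (k : ℝ) + 1 ≠ 0 := by positivity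
      push_cast
      field_simp

theorem stmt12 (M : ℕ) (hM : 2 ≤ M) (b : ℕ) : 0 < eta M b ∧ eta M b < 1 := by
  have hc1 : (1 : ℝ) < (M : ℝ) / ((M : ℝ) - 1) := by
    have hM1 : (1 : ℝ) < (M : ℝ) := by exact_mod_cast hM.trans_lt' one_lt_two
    rw [lt_div_iff₀ (by linarith)]
    linarith
  have hcpos : (0 : ℝ) < (M : ℝ) / ((M : ℝ) - 1) := by linarith
  have hlo : (0 : ℕ) < 2 ^ b := Nat.pow_pos (by norm_num)
  have hle : 2 ^ b ≤ 2 ^ (b + 1) := Nat.pow_le_pow_right (by norm_num) (by omega)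
  have hlt : 2 ^ b < 2 ^ (b + 1) := Nat.pow_lt_pow_right (by norm_num) (by omega)
  have hpos : ∀ i ∈ Finset.Ico (2 ^ b : ℕ) (2 ^ (b + 1) : ℕ),
      (0 : ℝ) < (i : ℝ) / ((i : ℝ) + (M : ℝ) / ((M : ℝ) - 1)) := by
    intro i hi
    have : 0 < i := lt_of_lt_of_le hlo (Finset.mem_Ico.mp hi).1
    have hi0 : (0 : ℝ) < i := by exact_mod_cast this
    positivity
  constructor
  · have := Finset.prod_pos hpos
    unfold eta; linarith
  · have hne : (Finset.Ico (2 ^ b : ℕ) (2 ^ (b + 1) : ℕ)).Nonempty := by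
      rw [Finset.nonempty_Ico]; exact hlt
    have hstrict : ∏ i ∈ Finset.Ico (2 ^ b : ℕ) (2 ^ (b + 1) : ℕ),
        (i : ℝ) / ((i : ℝ) + (M : ℝ) / ((M : ℝ) - 1))
        < ∏ i ∈ Finset.Ico (2 ^ b : ℕ) (2 ^ (b + 1) : ℕ), (i : ℝ) / ((i : ℝ) + 1) := by
      apply Finset.prod_lt_prod_of_nonempty hpos _ hne
      intro i hi
      have hipos : 0 < i := lt_of_lt_of_le hlo (Finset.mem_Ico.mp hi).1
      have hi0 : (0 : ℝ) < i := by exact_mod_cast hipos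
      apply div_lt_div_of_pos_left hi0 (by linarith)
      linarith
    have htel : ∏ i ∈ Finset.Ico (2 ^ b : ℕ) (2 ^ (b + 1) : ℕ), (i : ℝ) / ((i : ℝ) + 1)
        = ((2 : ℝ) ^ b) / (2 ^ (b + 1)) := by
      rw [telescope (2 ^ b) hlo (2 ^ (b + 1)) hle]
      push_cast
      ring
    have h2 : ((2 : ℝ) ^ b) / (2 ^ (b + 1)) = 1 / 2 := by
      rw [pow_succ]
      field_simp
    unfold eta
    rw [htel, h2] at hstrict
    linarith
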